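/- Let R11, R12, R21, R22 : ℝ → Matrix (Fin 3) (Fin 3) ℝ be matrix-valued functions of time, and suppose there exist constants c > 0 and M > 0 such that for every t ≥ 0 one has |det R11(t)| ≥ c, |det R22(t)| ≥ c, and every entry of R11(t), R12(t), R21(t), R22(t) is bounded in absolute value by M. Then there exists λ₀ ∈ (0,1) such that for every λ ∈ [0, λ₀) and every t ≥ 0, the 6×6 block matrix R(t;λ) = fromBlocks (R11(t)) (−λ·R12(t)) (−λ·R21(t)) (R22(t)) is invertible. -/
import Mathlib

open Matrix Finset

attribute [local instance] Matrix.linftyOpNormedRing Matrix.linftyOpNormedAlgebra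

private lemma norm_le_card_mul {m : Type*} [Fintype m] [DecidableEq m] (A : Matrix m m ℝ) (K : ℝ)
    (hK : 0 ≤ K) (h : ∀ i j, |A i j| ≤ K) : ‖A‖ ≤ (Fintype.card m) * K := by
  rw [Matrix.linfty_opNorm_def]
  rw [← Real.coe_toNNReal ((Fintype.card m) * K) (by positivity), NNReal.coe_le_coe]
  apply Finset.sup_le
  intro i _
  rw [← NNReal.coe_le_coe, Real.coe_toNNReal _ (by positivity)]
  push_cast
  calc (∑ j, (‖A i j‖₊ : ℝ)) = ∑ j, |A i j| := by
        simp [coe_nnnorm, Real.norm_eq_abs]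
    _ ≤ ∑ _j : m, K := Finset.sum_le_sum fun j _ => h i j
    _ = (Fintype.card m) * K := by rw [Finset.sum_const, Finset.card_univ, nsmul_eq_mul]

private lemma det_abs_le {m : Type*} [Fintype m] [DecidableEq m]
    (A : Matrix m m ℝ) (K : ℝ) (hK : 0 ≤ K) (h : ∀ i j, |A i j| ≤ K) :
    |A.det| ≤ (Nat.factorial (Fintype.card m)) * K ^ (Fintype.card m) := by
  rw [Matrix.det_apply]
  calc |∑ σ : Equiv.Perm m, Equiv.Perm.sign σ • ∏ i, A (σ i) i|
      ≤ ∑ σ : Equiv.Perm m, |Equiv.Perm.sign σ • ∏ i, A (σ i) i| :=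
        Finset.abs_sum_le_sum_abs _ _
    _ ≤ ∑ _σ : Equiv.Perm m, K ^ (Fintype.card m) := by
        refine Finset.sum_le_sum fun σ _ => ?_
        have h1 : |(Equiv.Perm.sign σ : ℤˣ) • ∏ i, A (σ i) i| = |∏ i, A (σ i) i| := by
          rcases Int.units_eq_one_or (Equiv.Perm.sign σ) with hs | hs <;>
            simp [hs, Units.smul_def, abs_neg]
        rw [h1, Finset.abs_prod]
        calc (∏ i, |A (σ i) i|) ≤ ∏ _i : m, K :=
              Finset.prod_le_prod (fun i _ => abs_nonneg _) (fun i _ => h (σ i) i)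
          _ = K ^ (Fintype.card m) := by
              simp [Finset.prod_const, Finset.card_univ]
    _ = (Nat.factorial (Fintype.card m)) * K ^ (Fintype.card m) := by
        rw [Finset.sum_const, Finset.card_univ, Fintype.card_perm, nsmul_eq_mul]

private lemma inv_entry_le {m : Type*} [Fintype m] [DecidableEq m]
    (A : Matrix m m ℝ) (K c : ℝ) (hc : 0 < c) (hK : 1 ≤ K)
    (hdet : c ≤ |A.det|) (h : ∀ i j, |A i j| ≤ K) (i j : m) :
    |A⁻¹ i j| ≤ (Nat.factorial (Fintype.card m)) * K ^ (Fintype.card m) / c := by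
  have hdet0 : A.det ≠ 0 := by
    intro h0; rw [h0, abs_zero] at hdet; linarith
  have hK0 : (0:ℝ) ≤ K := le_trans zero_le_one hK
  rw [Matrix.inv_def, Matrix.smul_apply, smul_eq_mul, abs_mul,
    Ring.inverse_eq_inv', abs_inv]
  have hadj : |A.adjugate i j| ≤ (Nat.factorial (Fintype.card m)) * K ^ (Fintype.card m) := by
    rw [Matrix.adjugate_apply]
    refine det_abs_le _ K hK0 fun k l => ?_
    rcases eq_or_ne k j with rfl | hkj
    · rw [Matrix.updateRow_self]
      rcases eq_or_ne l i with rfl | hli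
      · simp [Pi.single_apply, hK]
      · simp only [Pi.single_apply, hli, if_false, abs_zero]
        exact hK0
    · rw [Matrix.updateRow_ne hkj]; exact h k l
  have h1 : |A.det|⁻¹ ≤ c⁻¹ := by
    apply inv_anti₀ hc hdet
  calc |A.det|⁻¹ * |A.adjugate i j|
      ≤ c⁻¹ * ((Nat.factorial (Fintype.card m)) * K ^ (Fintype.card m)) := by
        apply mul_le_mul h1 hadj (abs_nonneg _) (by positivity)
    _ = (Nat.factorial (Fintype.card m)) * K ^ (Fintype.card m) / c := by
        ring

/-- **Invertibility Theorem** for the grand resistance matrix of two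
hydrodynamically interacting scallops: if the diagonal blocks have determinant
uniformly bounded away from zero and all entries of all blocks are uniformly
bounded, then for all sufficiently small interaction strengths `λ ∈ [0, λ₀)`
(with `λ₀ ∈ (0,1)`) the block matrix
`fromBlocks (R11 t) (−λ·R12 t) (−λ·R21 t) (R22 t)` is invertible for all `t ≥ 0`. -/
theorem invertibility_grand_resistance_matrix
    (R11 R12 R21 R22 : ℝ → Matrix (Fin 3) (Fin 3) ℝ)
    (c M : ℝ) (hc : 0 < c) (hM : 0 < M)
    (hdet11 : ∀ t : ℝ, 0 ≤ t → c ≤ |(R11 t).det|)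
    (hdet22 : ∀ t : ℝ, 0 ≤ t → c ≤ |(R22 t).det|)
    (hbound : ∀ t : ℝ, 0 ≤ t → ∀ i j : Fin 3,
      |R11 t i j| ≤ M ∧ |R12 t i j| ≤ M ∧ |R21 t i j| ≤ M ∧ |R22 t i j| ≤ M) :
    ∃ lam₀ ∈ Set.Ioo (0 : ℝ) 1, ∀ lam ∈ Set.Ico (0 : ℝ) lam₀, ∀ t : ℝ, 0 ≤ t →
      IsUnit (Matrix.fromBlocks (R11 t) ((-lam) • R12 t) ((-lam) • R21 t) (R22 t)) := by
  set K : ℝ := max M 1 with hKdef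
  have hK1 : (1:ℝ) ≤ K := le_max_right _ _
  have hK0 : (0:ℝ) ≤ K := le_trans zero_le_one hK1
  have hMK : M ≤ K := le_max_left _ _
  set B : ℝ := (6 * (720 * K ^ 6 / (c * c))) * (6 * K) with hBdef
  have hBpos : 0 < B := by positivity
  refine ⟨min (1/2) (1/(B+1)), ⟨lt_min (by norm_num) (by positivity), ?_⟩, ?_⟩
  · calc min (1/2) (1/(B+1)) ≤ 1/2 := min_le_left _ _
      _ < 1 := by norm_num
  intro lam hlam t ht
  obtain ⟨hlam0, hlamlt⟩ := hlam
  have hlamB : lam * B < 1 := by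
    have h1 : lam < 1/(B+1) := lt_of_lt_of_le hlamlt (min_le_right _ _)
    have h2 : lam * (B+1) < 1 := (lt_div_iff₀ (by positivity)).1 h1
    nlinarith
  -- the diagonal part and the interaction part
  set A0 : Matrix (Fin 3 ⊕ Fin 3) (Fin 3 ⊕ Fin 3) ℝ :=
    Matrix.fromBlocks (R11 t) 0 0 (R22 t) with hA0def
  set N : Matrix (Fin 3 ⊕ Fin 3) (Fin 3 ⊕ Fin 3) ℝ :=
    Matrix.fromBlocks 0 (-(R12 t)) (-(R21 t)) 0 with hNdef
  have hdetA0 : c * c ≤ |A0.det| := by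
    rw [hA0def, Matrix.det_fromBlocks_zero₂₁, abs_mul]
    exact mul_le_mul (hdet11 t ht) (hdet22 t ht) (le_of_lt hc) (abs_nonneg _)
  have hdetA0ne : A0.det ≠ 0 := by
    intro h0; rw [h0, abs_zero] at hdetA0; nlinarith
  have hA0unit : IsUnit A0 := by
    rw [Matrix.isUnit_iff_isUnit_det]
    exact isUnit_iff_ne_zero.2 hdetA0ne
  have hA0entries : ∀ i j, |A0 i j| ≤ K := by
    rintro (i | i) (j | j) <;>
      simp only [hA0def, Matrix.fromBlocks_apply₁₁, Matrix.fromBlocks_apply₁₂,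
        Matrix.fromBlocks_apply₂₁, Matrix.fromBlocks_apply₂₂, Matrix.zero_apply, abs_zero]
    · exact le_trans (hbound t ht i j).1 hMK
    · exact hK0
    · exact hK0
    · exact le_trans (hbound t ht i j).2.2.2 hMK
  have hNentries : ∀ i j, |N i j| ≤ K := by
    rintro (i | i) (j | j) <;>
      simp only [hNdef, Matrix.fromBlocks_apply₁₁, Matrix.fromBlocks_apply₁₂,
        Matrix.fromBlocks_apply₂₁, Matrix.fromBlocks_apply₂₂, Matrix.zero_apply,
        Matrix.neg_apply, abs_zero, abs_neg]
    · exact hK0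
    · exact le_trans (hbound t ht i j).2.1 hMK
    · exact le_trans (hbound t ht i j).2.2.1 hMK
    · exact hK0
  have hcard : Fintype.card (Fin 3 ⊕ Fin 3) = 6 := by simp
  have hinv_entries : ∀ i j, |A0⁻¹ i j| ≤ 720 * K ^ 6 / (c * c) := by
    intro i j
    have := inv_entry_le A0 K (c*c) (by positivity) hK1 hdetA0 hA0entries i j
    rw [hcard] at this
    have h720 : ((Nat.factorial 6 : ℕ) : ℝ) = 720 := by norm_num [Nat.factorial]
    rwa [h720] at this
  have hinv_norm : ‖A0⁻¹‖ ≤ 6 * (720 * K ^ 6 / (c * c)) := by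
    have := norm_le_card_mul A0⁻¹ (720 * K ^ 6 / (c * c)) (by positivity) hinv_entries
    rw [hcard] at this
    exact_mod_cast this
  have hN_norm : ‖N‖ ≤ 6 * K := by
    have := norm_le_card_mul N K hK0 hNentries
    rw [hcard] at this
    exact_mod_cast this
  set E : Matrix (Fin 3 ⊕ Fin 3) (Fin 3 ⊕ Fin 3) ℝ := A0⁻¹ * (lam • N) with hEdef
  have hE_norm : ‖E‖ < 1 := by
    calc ‖E‖ ≤ ‖A0⁻¹‖ * ‖lam • N‖ := Matrix.linfty_opNorm_mul _ _
      _ = ‖A0⁻¹‖ * (|lam| * ‖N‖) := by rw [norm_smul, Real.norm_eq_abs]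
      _ = ‖A0⁻¹‖ * (lam * ‖N‖) := by rw [abs_of_nonneg hlam0]
      _ ≤ (6 * (720 * K ^ 6 / (c * c))) * (lam * (6 * K)) := by
          apply mul_le_mul hinv_norm _ (by positivity) (by positivity)
          exact mul_le_mul_of_nonneg_left hN_norm hlam0
      _ = lam * B := by rw [hBdef]; ring
      _ < 1 := hlamB
  -- 1 + E has nonzero determinant
  have hdet1E : (1 + E).det ≠ 0 := by
    intro h0
    obtain ⟨v, hv, hv0⟩ := (Matrix.exists_mulVec_eq_zero_iff).2 h0
    have h1 : v + E *ᵥ v = 0 := by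
      rw [Matrix.add_mulVec, Matrix.one_mulVec] at hv0
      exact hv0
    have h2 : ‖v‖ = ‖E *ᵥ v‖ := by
      conv_lhs => rw [eq_neg_of_add_eq_zero_left h1]
      rw [norm_neg]
    have h3 : ‖E *ᵥ v‖ ≤ ‖E‖ * ‖v‖ := Matrix.linfty_opNorm_mulVec _ _
    have hvpos : 0 < ‖v‖ := norm_pos_iff.2 hv
    nlinarith
  -- factorization
  have hfact : Matrix.fromBlocks (R11 t) ((-lam) • R12 t) ((-lam) • R21 t) (R22 t)
      = A0 * (1 + E) := by
    rw [mul_add, mul_one, hEdef, ← Matrix.mul_assoc, Matrix.mul_nonsing_inv A0 (isUnit_iff_ne_zero.2 hdetA0ne), Matrix.one_mul]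
    rw [hNdef, Matrix.fromBlocks_smul, hA0def, Matrix.fromBlocks_add]
    congr 1 <;> simp [neg_smul, smul_neg]
  rw [hfact]
  refine hA0unit.mul ?_
  rw [Matrix.isUnit_iff_isUnit_det]
  exact isUnit_iff_ne_zero.2 hdet1E
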